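/- Let M(D_4) ⊂ Z^{D_4^+} be the lattice of integer-valued functions n on the 12 positive roots of D_4 satisfying Σ_α n_α · (α ⊗ α) = 0 in Sym^2 of the root lattice. Then M(D_4) consists exactly of the functions that are constant on each of the three fourtuples F_1, F_2, F_3 of pairwise orthogonal positive roots and whose three constant values sum to 0. -/
import Mathlib


def stdVec (i : Fin 4) : Fin 4 → ℤ := fun j => if j = i then 1 else 0

def dotZ (v w : Fin 4 → ℤ) : ℤ := ∑ i, v i * w i

/-- The 12 positive roots of `D₄`. -/
def D4pos : Finset (Fin 4 → ℤ) :=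
  ((Finset.univ : Finset (Fin 4 × Fin 4)).filter (fun p => p.1 < p.2)).image
      (fun p => stdVec p.1 - stdVec p.2) ∪
  ((Finset.univ : Finset (Fin 4 × Fin 4)).filter (fun p => p.1 < p.2)).image
      (fun p => stdVec p.1 + stdVec p.2)

def r1 : Fin 4 → ℤ := ![1,-1,0,0]
def r2 : Fin 4 → ℤ := ![1,1,0,0]
def r3 : Fin 4 → ℤ := ![0,0,1,-1]
def r4 : Fin 4 → ℤ := ![0,0,1,1]
def r5 : Fin 4 → ℤ := ![1,0,-1,0]
def r6 : Fin 4 → ℤ := ![1,0,1,0]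
def r7 : Fin 4 → ℤ := ![0,1,0,-1]
def r8 : Fin 4 → ℤ := ![0,1,0,1]
def r9 : Fin 4 → ℤ := ![1,0,0,-1]
def r10 : Fin 4 → ℤ := ![1,0,0,1]
def r11 : Fin 4 → ℤ := ![0,1,-1,0]
def r12 : Fin 4 → ℤ := ![0,1,1,0]

lemma hD4 : D4pos = {r1,r2,r3,r4,r5,r6,r7,r8,r9,r10,r11,r12} := by decide

lemma expand (n : (Fin 4 → ℤ) → ℤ) (x : Fin 4 → ℤ) :
    ∑ α ∈ D4pos, n α * (dotZ α x) ^ 2 =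
    n r1 * (x 0 - x 1)^2 + n r2 * (x 0 + x 1)^2 + n r3 * (x 2 - x 3)^2 +
    n r4 * (x 2 + x 3)^2 + n r5 * (x 0 - x 2)^2 + n r6 * (x 0 + x 2)^2 +
    n r7 * (x 1 - x 3)^2 + n r8 * (x 1 + x 3)^2 + n r9 * (x 0 - x 3)^2 +
    n r10 * (x 0 + x 3)^2 + n r11 * (x 1 - x 2)^2 + n r12 * (x 1 + x 2)^2 := by
  rw [hD4]
  rw [Finset.sum_insert (by decide), Finset.sum_insert (by decide),
    Finset.sum_insert (by decide), Finset.sum_insert (by decide),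
    Finset.sum_insert (by decide), Finset.sum_insert (by decide),
    Finset.sum_insert (by decide), Finset.sum_insert (by decide),
    Finset.sum_insert (by decide), Finset.sum_insert (by decide),
    Finset.sum_insert (by decide), Finset.sum_singleton]
  simp only [dotZ, Fin.sum_univ_four, r1, r2, r3, r4, r5, r6, r7, r8, r9, r10, r11, r12,
    Matrix.cons_val_zero, Matrix.cons_val_one, Matrix.head_cons, Matrix.cons_val_two,
    Matrix.tail_cons, Matrix.cons_val_three]
  ring

def G1 : Finset (Fin 4 → ℤ) := {r1,r2,r3,r4}
def G2 : Finset (Fin 4 → ℤ) := {r5,r6,r7,r8}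
def G3 : Finset (Fin 4 → ℤ) := {r9,r10,r11,r12}

lemma main (n : (Fin 4 → ℤ) → ℤ) :
    (∀ x : Fin 4 → ℤ, ∑ α ∈ D4pos, n α * (dotZ α x) ^ 2 = 0) ↔
    ∃ c1 c2 c3 : ℤ, c1 + c2 + c3 = 0 ∧
      (∀ α ∈ G1, n α = c1) ∧ (∀ α ∈ G2, n α = c2) ∧ (∀ α ∈ G3, n α = c3) := by
  constructor
  · intro h
    have E1 := h ![1,0,0,0]; have E2 := h ![0,1,0,0]
    have E3 := h ![0,0,1,0]; have E4 := h ![0,0,0,1]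
    have E12 := h ![1,1,0,0]; have E13 := h ![1,0,1,0]
    have E14 := h ![1,0,0,1]; have E23 := h ![0,1,1,0]
    have E24 := h ![0,1,0,1]; have E34 := h ![0,0,1,1]
    rw [expand] at E1 E2 E3 E4 E12 E13 E14 E23 E24 E34
    norm_num [Matrix.cons_val_zero, Matrix.cons_val_one, Matrix.head_cons,
      Matrix.cons_val_two, Matrix.tail_cons, Matrix.cons_val_three] at E1 E2 E3 E4 E12 E13 E14 E23 E24 E34
    refine ⟨n r1, n r5, n r9, by linarith, ?_, ?_, ?_⟩ <;>
      (intro α hα; fin_cases hα) <;> linarith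
  · rintro ⟨c1, c2, c3, hs, h1, h2, h3⟩ x
    rw [expand]
    rw [h1 r1 (by decide), h1 r2 (by decide), h1 r3 (by decide), h1 r4 (by decide),
      h2 r5 (by decide), h2 r6 (by decide), h2 r7 (by decide), h2 r8 (by decide),
      h3 r9 (by decide), h3 r10 (by decide), h3 r11 (by decide), h3 r12 (by decide)]
    linear_combination 2 * (x 0 ^ 2 + x 1 ^ 2 + x 2 ^ 2 + x 3 ^ 2) * hs

lemma filt : ∀ α ∈ D4pos,
    D4pos.filter (fun β => β = α ∨ dotZ α β = 0) = G1 ∨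
    D4pos.filter (fun β => β = α ∨ dotZ α β = 0) = G2 ∨
    D4pos.filter (fun β => β = α ∨ dotZ α β = 0) = G3 := by decide

lemma cardG : G1.card = 4 ∧ G2.card = 4 ∧ G3.card = 4 := by decide

lemma uniq (F : Finset (Fin 4 → ℤ)) (hF : F ⊆ D4pos) (hc : F.card = 4)
    (ho : ∀ α ∈ F, ∀ β ∈ F, α ≠ β → dotZ α β = 0) :
    F = G1 ∨ F = G2 ∨ F = G3 := by
  have hne : F.Nonempty := Finset.card_pos.mp (by omega)
  obtain ⟨α, hα⟩ := hne
  set T := D4pos.filter (fun β => β = α ∨ dotZ α β = 0) with hT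
  have hsubT : F ⊆ T := by
    intro β hβ
    simp only [hT, Finset.mem_filter]
    refine ⟨hF hβ, ?_⟩
    by_cases h : β = α
    · exact Or.inl h
    · exact Or.inr (by have := ho α hα β hβ (Ne.symm h); rwa [dotZ] at this ⊢)
  have h3 := filt α (hF hα)
  have hcT : T.card = 4 := by
    rcases h3 with h | h | h <;> rw [hT, h] <;>
      [exact cardG.1; exact cardG.2.1; exact cardG.2.2]
  have hFT : F = T := Finset.eq_of_subset_of_card_le hsubT (by omega)
  rw [hFT]; exact h3

set_option maxHeartbeats 2000000 in
/-- Let `F₁, F₂, F₃` be the (unique) partition of `D₄⁺` into fourtuples of pairwise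
orthogonal roots.  A function `n : D₄⁺ → ℤ` satisfies `Σ n_α · (α ⊗ α) = 0` in `Sym²` of
the root lattice (equivalently, the quadratic form `x ↦ Σ n_α (α·x)²` vanishes
identically) if and only if `n` is constant on each fourtuple `Fₖ` with the three
constant values summing to `0`. -/
theorem MD4_characterization (F1 F2 F3 : Finset (Fin 4 → ℤ))
    (hsub : F1 ⊆ D4pos ∧ F2 ⊆ D4pos ∧ F3 ⊆ D4pos)
    (hcard : F1.card = 4 ∧ F2.card = 4 ∧ F3.card = 4)
    (horth : ∀ F ∈ [F1, F2, F3], ∀ α ∈ F, ∀ β ∈ F, α ≠ β → dotZ α β = 0)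
    (hdisj : Disjoint F1 F2 ∧ Disjoint F1 F3 ∧ Disjoint F2 F3)
    (hunion : F1 ∪ F2 ∪ F3 = D4pos)
    (n : (Fin 4 → ℤ) → ℤ) :
    (∀ x : Fin 4 → ℤ, ∑ α ∈ D4pos, n α * (dotZ α x) ^ 2 = 0) ↔
    ∃ c1 c2 c3 : ℤ, c1 + c2 + c3 = 0 ∧
      (∀ α ∈ F1, n α = c1) ∧ (∀ α ∈ F2, n α = c2) ∧ (∀ α ∈ F3, n α = c3) := by
  obtain ⟨hs1, hs2, hs3⟩ := hsub
  obtain ⟨hc1, hc2, hc3⟩ := hcard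
  obtain ⟨hd12, hd13, hd23⟩ := hdisj
  have u1 := uniq F1 hs1 hc1 (horth F1 (by simp))
  have u2 := uniq F2 hs2 hc2 (horth F2 (by simp))
  have u3 := uniq F3 hs3 hc3 (horth F3 (by simp))
  clear hunion horth
  rcases u1 with h1 | h1 | h1 <;> rcases u2 with h2 | h2 | h2 <;>
    rcases u3 with h3 | h3 | h3 <;> subst h1 <;> subst h2 <;> subst h3 <;>
    first
    | exact absurd ((Finset.disjoint_self_iff_empty _).mp hd12) (by decide)
    | exact absurd ((Finset.disjoint_self_iff_empty _).mp hd13) (by decide)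
    | exact absurd ((Finset.disjoint_self_iff_empty _).mp hd23) (by decide)
    | (rw [main n]
       all_goals constructor <;> rintro ⟨a, b, c, hsum, p, q, r⟩ <;>
         first
         | exact ⟨a, b, c, hsum, p, q, r⟩
         | exact ⟨a, c, b, by linarith, p, r, q⟩
         | exact ⟨b, a, c, by linarith, q, p, r⟩
         | exact ⟨b, c, a, by linarith, q, r, p⟩
         | exact ⟨c, a, b, by linarith, r, p, q⟩
         | exact ⟨c, b, a, by linarith, r, q, p⟩)
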